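/- Let v be an additive valuation over goods [m], let n ∈ ℕ, and let MMS = MMS^n([m]). Suppose bundles {B_a}_{a∈S} with S of size |S| ≤ n−1 are pairwise disjoint subsets of [m], and for each a ∈ S either |B_a| = 1 or v(B_a) ≤ MMS. Then v([m] \ ∪_{a∈S} B_a) ≥ (n − |S|) · MMS. -/

import Mathlib

open Finset

/-- `MMSval v k G` is the maximin share value: the supremum over all partitions of `G`
into `k` bundles of the minimum bundle value under the additive valuation with item
values `v`. -/
noncomputable def MMSval {m : ℕ} (v : Fin m → ℝ) (k : ℕ) (G : Finset (Fin m)) : ℝ :=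
  ⨆ P : {P : Fin k → Finset (Fin m) //
      (∀ a b : Fin k, a ≠ b → Disjoint (P a) (P b)) ∧ Finset.univ.biUnion P = G},
    ⨅ j : Fin k, ∑ g ∈ P.1 j, v g

/-- If pairwise disjoint bundles `B a` for `a ∈ S`, `|S| ≤ n − 1`, are
assigned so that each is either a singleton or worth at most `MMS = MMS^n([m])`, then
the unassigned goods are worth at least `(n − |S|) · MMS`. -/
theorem value_of_remaining_goods_ge
    (n m : ℕ)
    (v : Fin m → ℝ) (hv : ∀ g, 0 ≤ v g)
    (S : Finset (Fin n)) (hS : S.card ≤ n - 1)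
    (B : Fin n → Finset (Fin m))
    (hdisj : ∀ a ∈ S, ∀ b ∈ S, a ≠ b → Disjoint (B a) (B b))
    (hB : ∀ a ∈ S, (B a).card = 1 ∨ ∑ g ∈ B a, v g ≤ MMSval v n Finset.univ) :
    ((n : ℝ) - S.card) * MMSval v n Finset.univ
      ≤ ∑ g ∈ Finset.univ \ S.biUnion B, v g := by
  rcases Nat.eq_zero_or_pos n with hn | hn
  · subst hn
    have hSe : S = ∅ := Finset.eq_empty_of_isEmpty S
    subst hSe
    simp only [Finset.card_empty, Nat.cast_zero, sub_zero, Nat.cast_zero, zero_mul,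
      Finset.biUnion_empty, Finset.sdiff_empty]
    exact Finset.sum_nonneg fun g _ => hv g
  -- n ≥ 1
  haveI : Nonempty (Fin n) := ⟨⟨0, hn⟩⟩
  set MMS := MMSval v n (Finset.univ : Finset (Fin m)) with hMMSdef
  -- the partition type is nonempty
  have hne : Nonempty {P : Fin n → Finset (Fin m) //
      (∀ a b : Fin n, a ≠ b → Disjoint (P a) (P b)) ∧
        Finset.univ.biUnion P = (Finset.univ : Finset (Fin m))} := by
    refine ⟨⟨fun j => if j = ⟨0, hn⟩ then Finset.univ else ∅, ?_, ?_⟩⟩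
    · intro a b hab
      by_cases ha : a = ⟨0, hn⟩
      · have hb : b ≠ ⟨0, hn⟩ := by rw [ha] at hab; exact hab.symm
        simp [ha, hb]
      · simp [ha]
    · apply Finset.Subset.antisymm (Finset.subset_univ _)
      intro x _
      exact Finset.mem_biUnion.2 ⟨⟨0, hn⟩, Finset.mem_univ _, by simp⟩
  haveI := hne
  -- the sup is attained at some partition P
  obtain ⟨P, hP⟩ := exists_eq_ciSup_of_finite
    (f := fun P : {P : Fin n → Finset (Fin m) //
      (∀ a b : Fin n, a ≠ b → Disjoint (P a) (P b)) ∧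
        Finset.univ.biUnion P = (Finset.univ : Finset (Fin m))} =>
      ⨅ j : Fin n, ∑ g ∈ P.1 j, v g)
  have hPMMS : (⨅ j : Fin n, ∑ g ∈ P.1 j, v g) = MMS := hP
  have hPj : ∀ j : Fin n, MMS ≤ ∑ g ∈ P.1 j, v g := by
    intro j
    rw [← hPMMS]
    exact ciInf_le (Set.Finite.bddBelow (Set.finite_range _)) j
  have hMMS0 : 0 ≤ MMS := by
    rw [← hPMMS]
    exact le_ciInf fun j => Finset.sum_nonneg fun g _ => hv g
  -- index function
  have hex : ∀ x : Fin m, ∃ j : Fin n, x ∈ P.1 j := by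
    intro x
    have : x ∈ Finset.univ.biUnion P.1 := P.2.2.symm ▸ Finset.mem_univ x
    rcases Finset.mem_biUnion.1 this with ⟨j, _, hj⟩
    exact ⟨j, hj⟩
  choose idx hidx using hex
  classical
  set S₁ := S.filter (fun a => (B a).card = 1) with hS₁
  set S₂ := S.filter (fun a => ¬ (B a).card = 1) with hS₂
  set G₁ := S₁.biUnion B with hG₁
  set T := G₁.image idx with hT
  -- card facts
  have hdisj₁ : (↑S₁ : Set (Fin n)).PairwiseDisjoint B := by
    intro a ha b hb hab
    exact hdisj a (Finset.mem_of_mem_filter a ha) b (Finset.mem_of_mem_filter b hb) hab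
  have hcardG₁ : G₁.card = S₁.card := by
    rw [hG₁, Finset.card_biUnion (fun a ha b hb hab => hdisj₁ ha hb hab)]
    rw [Finset.sum_congr rfl (fun a ha => (Finset.mem_filter.1 ha).2)]
    simp
    rfl
  have hcardT : T.card ≤ S₁.card := hcardG₁ ▸ Finset.card_image_le
  have hcards : S₁.card + S₂.card = S.card := Finset.card_filter_add_card_filter_not _
  -- singleton bundles are covered by bundles of P indexed by T
  have hG₁sub : G₁ ⊆ T.biUnion P.1 := by
    intro x hx
    exact Finset.mem_biUnion.2 ⟨idx x, Finset.mem_image_of_mem idx hx, hidx x⟩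
  have hsum₁ : ∑ a ∈ S₁, ∑ g ∈ B a, v g ≤ ∑ j ∈ T, ∑ g ∈ P.1 j, v g := by
    rw [← Finset.sum_biUnion (fun a ha b hb hab => hdisj₁ ha hb hab)]
    rw [← Finset.sum_biUnion (fun a _ b _ hab => P.2.1 a b hab)]
    exact Finset.sum_le_sum_of_subset_of_nonneg hG₁sub (fun g _ _ => hv g)
  -- low-value bundles
  have hsum₂ : ∑ a ∈ S₂, ∑ g ∈ B a, v g ≤ (S₂.card : ℝ) * MMS := by
    calc ∑ a ∈ S₂, ∑ g ∈ B a, v g ≤ ∑ _a ∈ S₂, MMS := by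
          refine Finset.sum_le_sum fun a ha => ?_
          rcases Finset.mem_filter.1 ha with ⟨haS, hna⟩
          rcases hB a haS with h | h
          · exact absurd h hna
          · exact h
      _ = (S₂.card : ℝ) * MMS := by rw [Finset.sum_const, nsmul_eq_mul]
  -- total value decomposed over partition
  have htotal : ∑ g : Fin m, v g = ∑ j : Fin n, ∑ g ∈ P.1 j, v g := by
    conv_lhs => rw [show (Finset.univ : Finset (Fin m)) = Finset.univ.biUnion P.1 from P.2.2.symm]
    exact Finset.sum_biUnion (fun a _ b _ hab => P.2.1 a b hab)
  have hsplitT : ∑ j : Fin n, ∑ g ∈ P.1 j, v g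
      = (∑ j ∈ Finset.univ \ T, ∑ g ∈ P.1 j, v g) + ∑ j ∈ T, ∑ g ∈ P.1 j, v g :=
    (Finset.sum_sdiff (Finset.subset_univ T)).symm
  have hrest : ((n : ℝ) - T.card) * MMS ≤ ∑ j ∈ Finset.univ \ T, ∑ g ∈ P.1 j, v g := by
    have hc : (Finset.univ \ T).card = n - T.card := by
      rw [Finset.card_sdiff_of_subset (Finset.subset_univ T), Finset.card_univ, Fintype.card_fin]
    calc ((n : ℝ) - T.card) * MMS = ((n - T.card : ℕ) : ℝ) * MMS := by
          rw [Nat.cast_sub (le_trans (Finset.card_le_univ T) (by simp))]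
      _ = ((Finset.univ \ T).card : ℝ) * MMS := by rw [hc]
      _ ≤ ∑ j ∈ Finset.univ \ T, ∑ g ∈ P.1 j, v g := by
          rw [← nsmul_eq_mul]
          exact Finset.card_nsmul_le_sum _ _ _ (fun j _ => hPj j)
  -- assigned value
  have hU : ∑ g ∈ S.biUnion B, v g = ∑ a ∈ S, ∑ g ∈ B a, v g :=
    Finset.sum_biUnion (fun a ha b hb hab => hdisj a ha b hb hab)
  have hSsplit : ∑ a ∈ S, ∑ g ∈ B a, v g
      = ∑ a ∈ S₁, ∑ g ∈ B a, v g + ∑ a ∈ S₂, ∑ g ∈ B a, v g :=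
    (Finset.sum_filter_add_sum_filter_not S _ _).symm
  have hrem : ∑ g ∈ Finset.univ \ S.biUnion B, v g
      = ∑ g : Fin m, v g - ∑ g ∈ S.biUnion B, v g := by
    have := Finset.sum_sdiff (Finset.subset_univ (S.biUnion B)) (f := v)
    linarith [this]
  -- put everything together
  have hTcast : (T.card : ℝ) + (S₂.card : ℝ) ≤ (S.card : ℝ) := by
    have : T.card + S₂.card ≤ S.card := hcards ▸ Nat.add_le_add_right hcardT _
    exact_mod_cast this
  have hfinal : ((n : ℝ) - S.card) * MMS ≤ ((n : ℝ) - T.card) * MMS - (S₂.card : ℝ) * MMS := by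
    nlinarith [hMMS0]
  rw [hrem, htotal, hsplitT, hU, hSsplit]
  linarith [hsum₁, hsum₂, hrest]
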